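/- In the single-service scalar threshold model h_θ(x) = sign(x + θ) with utility u(x, θ) = min(x + θ, 1) and hinge-type loss ℓ(θ, x, y) = max(0, 1 - y(x + θ)): for n users with features x_k = -0.7·k (k = 0,...,n-1), all labeled +1, and initial θ(0) = 0.5, exactly one new user receives positive utility at each timestep under the dynamics where the classifier moves minimally to achieve zero loss on observed users; hence convergence to a zero-loss state takes at least n timesteps. -/
import Mathlib


/-- Single-service scalar threshold model. Users `x k = -0.7·k`
(`k = 0,…,n-1`, all labeled `+1`), initial `θ 0 = 0.5`. The service retrains to the
minimum-change parameter achieving zero loss (`x + θ ≥ 1`) on all users observed so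
far (`O t`, those with positive utility at some past time), and a user has positive
utility iff `x k + θ > 0`. Then at each timestep `t < n`, exactly `t + 1` users
receive positive utility (one new user per step), and the state is not zero-loss
(some user with positive utility incurs positive loss); hence convergence takes at
least `n` timesteps. -/
theorem stmt_16 (n : ℕ)
    (x : Fin n → ℝ) (hx : ∀ k : Fin n, x k = -(0.7) * (k : ℝ))
    (θ : ℕ → ℝ) (hθ0 : θ 0 = 0.5)
    (O : ℕ → Finset (Fin n))
    (hO0 : O 0 = Finset.univ.filter fun k => 0 < x k + θ 0)
    (hOrec : ∀ t, O (t + 1) = O t ∪ (Finset.univ.filter fun k => 0 < x k + θ (t + 1)))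
    (hθrec : ∀ t, θ (t + 1) = Finset.fold max (θ t) (fun k => 1 - x k) (O t)) :
    ∀ t < n,
      ((Finset.univ.filter fun k => 0 < x k + θ t).card = t + 1) ∧
      (∃ k : Fin n, 0 < x k + θ t ∧ 0 < max (0 : ℝ) (1 - (x k + θ t))) := by
  -- closed form for θ
  set c : ℕ → ℝ := fun t => if t = 0 then (0.5 : ℝ) else 0.3 + 0.7 * t with hc
  -- the positivity condition under value c t is exactly k ≤ t
  have hiff : ∀ t, ∀ k : Fin n, (0 < x k + c t ↔ (k : ℕ) ≤ t) := by
    intro t k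
    rw [hx]
    rcases Nat.eq_zero_or_pos t with ht | ht
    · subst ht
      simp only [hc, if_pos rfl]
      constructor
      · intro h
        have hk : (k : ℝ) < 1 := by linarith
        have : (k : ℕ) < 1 := by exact_mod_cast hk
        omega
      · intro h
        have : (k : ℕ) = 0 := by omega
        rw [this] ; norm_num
    · have ht' : t ≠ 0 := by omega
      simp only [hc, if_neg ht']
      constructor
      · intro h
        have hk : (k : ℝ) < (t : ℝ) + 1 := by nlinarith
        have : (k : ℕ) < t + 1 := by exact_mod_cast hk
        omega
      · intro h
        have hk : (k : ℝ) ≤ (t : ℝ) := by exact_mod_cast h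
        nlinarith
  -- invariant: θ t = c t and O t = {k | k ≤ t}, for t < n
  have key : ∀ t, t < n → θ t = c t ∧
      O t = Finset.univ.filter (fun k : Fin n => (k : ℕ) ≤ t) := by
    intro t
    induction t with
    | zero =>
      intro _
      have hθ : θ 0 = c 0 := by simp [hc, hθ0]
      refine ⟨hθ, ?_⟩
      rw [hO0]
      apply Finset.filter_congr
      intro k _
      rw [hθ]
      exact hiff 0 k
    | succ t ih =>
      intro ht
      obtain ⟨hθt, hOt⟩ := ih (by omega)
      have htn : t < n := by omega
      have hmem : (⟨t, htn⟩ : Fin n) ∈ O t := by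
        rw [hOt]; simp
      have hval : θ (t + 1) = 1 + 0.7 * t := by
        have hle : θ (t + 1) ≤ 1 + 0.7 * t := by
          rw [hθrec]
          rw [Finset.fold_max_le]
          constructor
          · rw [hθt]
            rcases Nat.eq_zero_or_pos t with h0 | h0
            · subst h0; simp [hc]; norm_num
            · have : t ≠ 0 := by omega
              simp only [hc, if_neg this]
              linarith
          · intro k hk
            rw [hOt] at hk
            simp only [Finset.mem_filter] at hk
            have : (k : ℝ) ≤ (t : ℝ) := by exact_mod_cast hk.2
            rw [hx]; linarith
        have hge : 1 + 0.7 * t ≤ θ (t + 1) := by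
          rw [hθrec, Finset.le_fold_max]
          right
          refine ⟨⟨t, htn⟩, hmem, ?_⟩
          rw [hx]
          norm_num
        linarith
      have hθs : θ (t + 1) = c (t + 1) := by
        rw [hval]
        have : t + 1 ≠ 0 := by omega
        simp only [hc, if_neg this]
        push_cast
        ring
      refine ⟨hθs, ?_⟩
      rw [hOrec, hOt]
      have hfil : (Finset.univ.filter fun k : Fin n => 0 < x k + θ (t + 1)) =
          Finset.univ.filter (fun k : Fin n => (k : ℕ) ≤ t + 1) := by
        apply Finset.filter_congr
        intro k _
        rw [hθs]
        exact hiff (t + 1) k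
      rw [hfil]
      ext k
      simp only [Finset.mem_union, Finset.mem_filter, Finset.mem_univ, true_and]
      omega
  -- cardinality of {k | k ≤ t} in Fin n is t + 1 when t < n
  have hcard : ∀ t (ht : t < n),
      (Finset.univ.filter (fun k : Fin n => (k : ℕ) ≤ t)).card = t + 1 := by
    intro t ht
    have : Finset.univ.filter (fun k : Fin n => (k : ℕ) ≤ t) =
        Finset.Iic (⟨t, ht⟩ : Fin n) := by
      ext k
      simp [Finset.mem_Iic, Fin.le_def]
    rw [this, Fin.card_Iic]
  intro t ht
  obtain ⟨hθt, _⟩ := key t ht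
  have hfil : (Finset.univ.filter fun k : Fin n => 0 < x k + θ t) =
      Finset.univ.filter (fun k : Fin n => (k : ℕ) ≤ t) := by
    apply Finset.filter_congr
    intro k _
    rw [hθt]
    exact hiff t k
  refine ⟨by rw [hfil, hcard t ht], ⟨t, ht⟩, ?_, ?_⟩
  · rw [hθt]
    exact (hiff t ⟨t, ht⟩).2 (le_refl t)
  · have hlt : x ⟨t, ht⟩ + θ t < 1 := by
      rw [hx, hθt]
      rcases Nat.eq_zero_or_pos t with h0 | h0
      · subst h0; simp [hc]; norm_num
      · have : t ≠ 0 := by omega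
        simp only [hc, if_neg this]
        norm_num
    exact lt_max_iff.2 (Or.inr (by linarith))
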